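/- For every even integer m ≥ 2, the identity Σ_{k=1}^{m/2} (2^k/(2k)!)·c_{m,k}·∏_{ℓ=1}^{k−1}(x² − ℓ²) = x^{m−2} holds in the polynomial ring ℚ[x], where the product over ℓ is the empty product 1 when k = 1. -/

import Mathlib

open scoped Classical

noncomputable section

/-- `c_{m,k} = Σ m!/((2p₁)!⋯(2p_k)!)` over all ordered `k`-tuples of positive integers with
`2(p₁+⋯+p_k) = m`. -/
def cmk (m k : ℕ) : ℕ :=
  ∑ p ∈ (Finset.univ : Finset (Fin k → Fin (m + 1))).filter
      (fun p => (∀ i, 1 ≤ (p i : ℕ)) ∧ 2 * (∑ i, (p i : ℕ)) = m),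
    m.factorial / ∏ i, (2 * (p i : ℕ)).factorial

namespace Stmt16

open PowerSeries Finset

/-- exp X -/
def E : ℚ⟦X⟧ := PowerSeries.exp ℚ
/-- exp (-X) -/
def Em : ℚ⟦X⟧ := PowerSeries.evalNegHom (PowerSeries.exp ℚ)
/-- cosh X - 1 -/
def U : ℚ⟦X⟧ := (PowerSeries.C (R := ℚ)) (1/2) * (E + Em) - 1
/-- sinh X -/
def Sh : ℚ⟦X⟧ := (PowerSeries.C (R := ℚ)) (1/2) * (E - Em)

lemma coeff_E (n : ℕ) : coeff (R := ℚ) n E = 1 / n.factorial := by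
  simp [E, PowerSeries.coeff_exp, Algebra.algebraMap_self]

lemma coeff_Em (n : ℕ) : coeff (R := ℚ) n Em = (-1)^n / n.factorial := by
  rw [Em, PowerSeries.evalNegHom, PowerSeries.coeff_rescale, ← E, coeff_E]
  ring

lemma coeff_U (n : ℕ) :
    coeff (R := ℚ) n U = if Even n ∧ n ≠ 0 then (1 : ℚ)/n.factorial else 0 := by
  rw [U, map_sub, PowerSeries.coeff_C_mul, map_add, coeff_E, coeff_Em, PowerSeries.coeff_one]
  rcases eq_or_ne n 0 with rfl | hn
  · norm_num
  · rcases Nat.even_or_odd n with he | ho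
    · rw [he.neg_one_pow, if_neg hn, if_pos ⟨he, hn⟩]
      ring
    · rw [ho.neg_one_pow, if_neg hn, if_neg (by simp [Nat.not_even_iff_odd.2 ho])]
      ring

lemma E_mul_Em : E * Em = 1 := PowerSeries.exp_mul_exp_neg_eq_one

lemma sq_Sh : Sh ^ 2 = U ^ 2 + 2 * U := by
  have h := E_mul_Em
  have h2 : ((PowerSeries.C (R := ℚ)) (1/2)) * ((PowerSeries.C (R := ℚ)) (1/2)) * 4 = 1 := by
    have : ((4 : ℚ⟦X⟧)) = (PowerSeries.C (R := ℚ)) 4 := by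
      rw [map_ofNat]
    rw [this, ← map_mul, ← map_mul, ← map_one ((PowerSeries.C (R := ℚ)))]
    norm_num
  rw [Sh, U]
  linear_combination (-(4 : ℚ⟦X⟧) * ((PowerSeries.C (R := ℚ)) (1/2))^2) * h - h2

lemma dE : d⁄dX ℚ E = E := by
  ext n
  rw [PowerSeries.coeff_derivative, coeff_E, coeff_E, Nat.factorial_succ]
  have h1 : ((n+1 : ℕ) : ℚ) ≠ 0 := by positivity
  have h2 : ((n.factorial : ℕ) : ℚ) ≠ 0 := Nat.cast_ne_zero.2 n.factorial_ne_zero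
  field_simp
  push_cast
  ring

lemma dEm : d⁄dX ℚ Em = -Em := by
  ext n
  rw [PowerSeries.coeff_derivative, coeff_Em, map_neg, coeff_Em, Nat.factorial_succ, pow_succ]
  have h1 : ((n+1 : ℕ) : ℚ) ≠ 0 := by positivity
  have h2 : ((n.factorial : ℕ) : ℚ) ≠ 0 := Nat.cast_ne_zero.2 n.factorial_ne_zero
  field_simp
  push_cast
  ring

lemma dCmul (r : ℚ) (f : ℚ⟦X⟧) : d⁄dX ℚ ((PowerSeries.C (R := ℚ)) r * f) = (PowerSeries.C (R := ℚ)) r * d⁄dX ℚ f := by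
  rw [← PowerSeries.smul_eq_C_mul, Derivation.map_smul, PowerSeries.smul_eq_C_mul]

lemma dU : d⁄dX ℚ U = Sh := by
  rw [U, Sh, map_sub, dCmul, map_add, dE, dEm, Derivation.map_one_eq_zero]
  ring

lemma dSh : d⁄dX ℚ Sh = U + 1 := by
  rw [Sh, U, dCmul, map_sub, dE, dEm]
  ring

lemma d2_pow (k : ℕ) (hk : 1 ≤ k) :
    d⁄dX ℚ (d⁄dX ℚ (U ^ k)) =
      (PowerSeries.C (R := ℚ)) ((k : ℚ)^2) * U ^ k +
        (PowerSeries.C (R := ℚ)) ((k : ℚ) * (2 * (k : ℚ) - 1)) * U ^ (k - 1) := by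
  obtain ⟨j, rfl⟩ : ∃ j, k = j + 1 := ⟨k - 1, by omega⟩
  cases j with
  | zero =>
    rw [pow_one, dU, dSh]
    norm_num
  | succ i =>
    have hs : Sh ^ 2 = U ^ 2 + 2 * U := sq_Sh
    rw [Derivation.leibniz_pow]
    rw [map_nsmul]
    rw [smul_eq_mul, dU]
    rw [Derivation.leibniz, smul_eq_mul, smul_eq_mul, dSh, Derivation.leibniz_pow,
      smul_eq_mul, dU]
    simp only [Nat.add_sub_cancel, nsmul_eq_mul, smul_eq_mul, map_pow, map_mul, map_add,
      map_sub, map_one, map_natCast, map_ofNat]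
    push_cast
    linear_combination ((i:ℚ⟦X⟧)+2) * ((i:ℚ⟦X⟧)+1) * U ^ i * hs

lemma cmk_cast (m k : ℕ) : coeff (R := ℚ) m (U ^ k) = (cmk m k : ℚ) / m.factorial := by
  classical
  rw [PowerSeries.coeff_pow]
  have step : ∀ l ∈ finsuppAntidiag (range k) m,
      (∏ i ∈ range k, coeff (R := ℚ) (l i) U) =
        if (∀ i ∈ range k, Even (l i) ∧ l i ≠ 0)
          then ∏ i ∈ range k, (((l i).factorial : ℕ) : ℚ)⁻¹ else 0 := by
    intro l _
    by_cases h : ∀ i ∈ range k, Even (l i) ∧ l i ≠ 0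
    · rw [if_pos h]
      refine Finset.prod_congr rfl fun i hi => ?_
      rw [coeff_U, if_pos (h i hi), one_div]
    · rw [if_neg h]
      push_neg at h
      obtain ⟨i, hi, hcond⟩ := h
      refine Finset.prod_eq_zero hi ?_
      rw [coeff_U, if_neg (by tauto)]
  rw [Finset.sum_congr rfl step, ← Finset.sum_filter]
  rw [cmk, Nat.cast_sum, Finset.sum_div]
  -- the forward map, from finsupps to tuples
  set G : (ℕ →₀ ℕ) → (Fin k → Fin (m+1)) :=
    fun l i => (⟨min (l i / 2) m, by omega⟩ : Fin (m+1)) with hG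
  -- the backward map
  set F : (Fin k → Fin (m+1)) → (ℕ →₀ ℕ) :=
    fun p => ∑ i : Fin k, Finsupp.single (i : ℕ) (2 * (p i : ℕ)) with hF
  have F_apply : ∀ (p : Fin k → Fin (m+1)) (i : Fin k), F p (i : ℕ) = 2 * (p i : ℕ) := by
    intro p i
    rw [hF]
    rw [Finsupp.finset_sum_apply]
    rw [Finset.sum_eq_single i]
    · simp [Finsupp.single_apply]
    · intro i' _ hne
      rw [Finsupp.single_apply, if_neg (by simpa [Fin.val_injective.eq_iff] using hne)]
    · simp
  have F_apply_out : ∀ (p : Fin k → Fin (m+1)) (j : ℕ), j ∉ range k → F p j = 0 := by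
    intro p j hj
    rw [hF, Finsupp.finset_sum_apply]
    refine Finset.sum_eq_zero fun i _ => ?_
    rw [Finsupp.single_apply, if_neg]
    intro hcon
    exact hj (by simpa using hcon ▸ i.isLt)
  refine Finset.sum_nbij' G F ?_ ?_ ?_ ?_ ?_
  · -- G maps into the tuple-filter
    intro l hl
    simp only [Finset.mem_filter, Finset.mem_finsuppAntidiag] at hl
    obtain ⟨⟨hsum, hsupp⟩, hP⟩ := hl
    have hle : ∀ i : Fin k, l (i : ℕ) ≤ m := by
      intro i
      calc l (i : ℕ) ≤ ∑ j ∈ range k, l j :=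
            Finset.single_le_sum (fun j _ => Nat.zero_le _) (by simp [i.isLt])
        _ = m := hsum
    have hGval : ∀ i : Fin k, 2 * ((G l i : ℕ)) = l (i : ℕ) := by
      intro i
      obtain ⟨r, hr⟩ := (hP (i : ℕ) (by simp [i.isLt])).1
      have : l (i : ℕ) / 2 = r := by omega
      simp only [hG, min_eq_left (Nat.le_trans (Nat.div_le_self _ _) (hle i))]
      omega
    simp only [Finset.mem_filter, Finset.mem_univ, true_and]
    constructor
    · intro i
      have hne := (hP (i : ℕ) (by simp [i.isLt])).2
      have := hGval i
      omega
    · have hgoal : 2 * ∑ i : Fin k, (G l i : ℕ) = m := by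
        rw [Finset.mul_sum, Finset.sum_congr rfl fun i _ => hGval i,
          Fin.sum_univ_eq_sum_range (fun j => l j) k]
        exact hsum
      exact hgoal
  · -- F maps into the finsupp-filter
    intro p hp
    simp only [Finset.mem_filter, Finset.mem_univ, true_and] at hp
    obtain ⟨h1, h2⟩ := hp
    have hmem : ∀ j ∈ range k, Even (F p j) ∧ F p j ≠ 0 := by
      intro j hj
      have hjk : j < k := Finset.mem_range.1 hj
      have : F p j = 2 * ((p ⟨j, hjk⟩ : ℕ)) := F_apply p ⟨j, hjk⟩
      rw [this]
      exact ⟨⟨(p ⟨j, hjk⟩ : ℕ), by ring⟩, by have := h1 ⟨j, hjk⟩; omega⟩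
    simp only [Finset.mem_filter, Finset.mem_finsuppAntidiag]
    refine ⟨⟨?_, ?_⟩, hmem⟩
    · rw [← Fin.sum_univ_eq_sum_range (fun j => F p j) k]
      rw [Finset.sum_congr rfl fun i _ => F_apply p i, ← Finset.mul_sum]
      exact h2
    · intro j hj
      by_contra hout
      exact (Finsupp.mem_support_iff.1 hj) (F_apply_out p j hout)
  · -- left inverse : F (G l) = l
    intro l hl
    simp only [Finset.mem_filter, Finset.mem_finsuppAntidiag] at hl
    obtain ⟨⟨hsum, hsupp⟩, hP⟩ := hl
    ext j
    by_cases hjk : j < k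
    · have hj : j ∈ range k := Finset.mem_range.2 hjk
      have hle : l j ≤ m :=
        hsum ▸ Finset.single_le_sum (f := fun j => l j) (fun j _ => Nat.zero_le _) hj
      have : F (G l) j = 2 * ((G l ⟨j, hjk⟩ : ℕ)) := F_apply (G l) ⟨j, hjk⟩
      rw [this]
      obtain ⟨r, hr⟩ := (hP j hj).1
      simp only [hG, min_eq_left (Nat.le_trans (Nat.div_le_self _ _) hle)]
      omega
    · rw [F_apply_out (G l) j (by simpa using hjk)]
      by_contra hne
      have : j ∈ l.support := Finsupp.mem_support_iff.2 fun hc => hne hc.symm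
      exact hjk (Finset.mem_range.1 (hsupp this))
  · -- right inverse : G (F p) = p
    intro p hp
    simp only [Finset.mem_filter, Finset.mem_univ, true_and] at hp
    funext i
    apply Fin.ext
    have h1 : F p (i : ℕ) = 2 * (p i : ℕ) := F_apply p i
    simp only [hG, h1]
    have : 2 * (p i : ℕ) / 2 = (p i : ℕ) := by omega
    rw [this, min_eq_left (Fin.is_le _)]
  · -- values agree
    intro l hl
    simp only [Finset.mem_filter, Finset.mem_finsuppAntidiag] at hl
    obtain ⟨⟨hsum, hsupp⟩, hP⟩ := hl
    have hle : ∀ i : Fin k, l (i : ℕ) ≤ m := by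
      intro i
      calc l (i : ℕ) ≤ ∑ j ∈ range k, l j :=
            Finset.single_le_sum (fun j _ => Nat.zero_le _) (by simp [i.isLt])
        _ = m := hsum
    have hGval : ∀ i : Fin k, 2 * ((G l i : ℕ)) = l (i : ℕ) := by
      intro i
      obtain ⟨r, hr⟩ := (hP (i : ℕ) (by simp [i.isLt])).1
      simp only [hG, min_eq_left (Nat.le_trans (Nat.div_le_self _ _) (hle i))]
      omega
    have hsum2 : ∑ i : Fin k, 2 * ((G l i : ℕ)) = m := by
      rw [Finset.sum_congr rfl fun i _ => hGval i]
      rw [Fin.sum_univ_eq_sum_range (fun j => l j) k]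
      exact hsum
    have hdvd : (∏ i : Fin k, (2 * ((G l i : ℕ))).factorial) ∣ m.factorial := by
      have := Nat.prod_factorial_dvd_factorial_sum Finset.univ (fun i : Fin k => 2 * ((G l i : ℕ)))
      rwa [hsum2] at this
    have hDne : ((∏ i : Fin k, (2 * ((G l i : ℕ))).factorial : ℕ) : ℚ) ≠ 0 :=
      Nat.cast_ne_zero.2 (Finset.prod_ne_zero_iff.2 fun i _ => Nat.factorial_ne_zero _)
    have hmne : ((m.factorial : ℕ) : ℚ) ≠ 0 := Nat.cast_ne_zero.2 m.factorial_ne_zero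
    rw [Nat.cast_div hdvd hDne]
    rw [div_right_comm, div_self hmne, one_div]
    rw [Nat.cast_prod, Finset.prod_inv_distrib]
    congr 1
    rw [← Fin.prod_univ_eq_prod_range (fun j => (((l j).factorial : ℕ) : ℚ)) k]
    refine Finset.prod_congr rfl fun i _ => ?_
    rw [← hGval i]

lemma cmk_rec (m k : ℕ) (hk : 1 ≤ k) :
    (cmk (m+2) k : ℚ) =
      (k : ℚ) * (2 * (k : ℚ) - 1) * (cmk m (k-1) : ℚ) + (k : ℚ)^2 * (cmk m k : ℚ) := by
  have h := congrArg (coeff (R := ℚ) m) (d2_pow k hk)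
  rw [PowerSeries.coeff_derivative, PowerSeries.coeff_derivative, map_add,
    PowerSeries.coeff_C_mul, PowerSeries.coeff_C_mul, cmk_cast, cmk_cast, cmk_cast] at h
  have hfac : (((m+1+1).factorial : ℕ) : ℚ) = (m+2) * (m+1) * m.factorial := by
    rw [Nat.factorial_succ, Nat.factorial_succ]
    push_cast
    ring
  have h2 : ((m.factorial : ℕ) : ℚ) ≠ 0 := Nat.cast_ne_zero.2 m.factorial_ne_zero
  have h3 : ((m:ℚ)+2) * ((m:ℚ)+1) ≠ 0 := by positivity
  rw [hfac] at h
  have hm2 : (m + 1 + 1) = m + 2 := by omega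
  rw [hm2] at h
  field_simp at h
  have hne : ((m:ℚ)+2) * (((m:ℚ)+1) * (m.factorial:ℚ)) ≠ 0 := by positivity
  apply mul_right_cancel₀ hne
  push_cast at h
  linear_combination ((m:ℚ)+1) * (m.factorial:ℚ) * h

lemma cmk_eq_zero {m k : ℕ} (h : m < 2*k) : cmk m k = 0 := by
  rw [cmk, Finset.filter_eq_empty_iff.2, Finset.sum_empty]
  rintro p -
  rintro ⟨h1, h2⟩
  have hk : k • 1 ≤ ∑ i, (p i : ℕ) := by
    have := Finset.card_nsmul_le_sum Finset.univ (fun i => (p i : ℕ)) 1 (fun i _ => h1 i)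
    simpa using this
  simp only [smul_eq_mul, mul_one] at hk
  omega

lemma cmk_zero_right {m : ℕ} (h : m ≠ 0) : cmk m 0 = 0 := by
  rw [cmk, Finset.filter_eq_empty_iff.2, Finset.sum_empty]
  rintro p -
  rintro ⟨-, h2⟩
  rw [Fin.sum_univ_zero] at h2
  omega

lemma cmk_two_one : (cmk 2 1 : ℚ) = 1 := by
  have h := cmk_cast 2 1
  rw [pow_one, coeff_U] at h
  norm_num at h
  linarith [h]

def Q (k : ℕ) : Polynomial ℚ :=
  ∏ l ∈ Finset.Icc 1 (k-1), ((Polynomial.X : Polynomial ℚ)^2 - Polynomial.C ((l:ℚ)^2))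

def a (s k : ℕ) : Polynomial ℚ :=
  Polynomial.C ((2:ℚ)^k / ((2*k).factorial : ℚ) * (cmk (2*s) k : ℚ))

lemma Q_succ (k : ℕ) (hk : 1 ≤ k) :
    Q (k+1) = Q k * ((Polynomial.X : Polynomial ℚ)^2 - Polynomial.C ((k:ℚ)^2)) := by
  unfold Q
  rw [Nat.add_sub_cancel]
  obtain ⟨j, rfl⟩ : ∃ j, k = j + 1 := ⟨k-1, by omega⟩
  rw [Finset.prod_Icc_succ_top (by omega)]
  norm_num

lemma a_zero (s : ℕ) (hs : 1 ≤ s) : a s 0 = 0 := by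
  unfold a
  rw [cmk_zero_right (by omega)]
  norm_num

lemma a_top (s : ℕ) : a s (s+1) = 0 := by
  unfold a
  rw [cmk_eq_zero (by omega)]
  norm_num

lemma a_rec (s k : ℕ) (hk : 1 ≤ k) :
    a (s+1) k = a s (k-1) + Polynomial.C ((k:ℚ)^2) * a s k := by
  obtain ⟨j, rfl⟩ : ∃ j, k = j + 1 := ⟨k-1, by omega⟩
  unfold a
  rw [Nat.add_sub_cancel, ← Polynomial.C_mul, ← Polynomial.C_add]
  congr 1
  have hrec := cmk_rec (2*s) (j+1) (by omega)
  rw [Nat.add_sub_cancel] at hrec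
  rw [show 2*(s+1) = 2*s + 2 by ring, hrec]
  have hfac : (((2*(j+1)).factorial : ℕ) : ℚ) = (2*(j:ℚ)+2) * ((2*(j:ℚ)+1) * (((2*j).factorial : ℕ) : ℚ)) := by
    rw [show 2*(j+1) = (2*j+1)+1 by ring, Nat.factorial_succ, Nat.factorial_succ]
    push_cast
    ring
  rw [hfac]
  have hne1 : (((2*j).factorial : ℕ) : ℚ) ≠ 0 := Nat.cast_ne_zero.2 (Nat.factorial_ne_zero _)
  push_cast
  field_simp
  ring

lemma key_aux : ∀ s : ℕ, 1 ≤ s →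
    ∑ k ∈ Finset.Icc 1 s, a s k * Q k = (Polynomial.X : Polynomial ℚ) ^ (2*s - 2) := by
  intro s hs
  induction s, hs using Nat.le_induction with
  | base =>
    rw [Finset.Icc_self, Finset.sum_singleton]
    unfold a Q
    norm_num [cmk_two_one, Nat.factorial]
  | succ s hs IH =>
    have h2s : 2 * (s + 1) - 2 = 2 * s := by omega
    have hxp : (Polynomial.X : Polynomial ℚ) ^ (2*s)
        = Polynomial.X^2 * Polynomial.X^(2*s-2) := by
      rw [← pow_add]
      congr 1
      omega
    rw [h2s, hxp, ← IH, Finset.mul_sum]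
    have hsplit : ∀ k ∈ Finset.Icc 1 s,
        (Polynomial.X : Polynomial ℚ)^2 * (a s k * Q k)
          = a s k * Q (k+1) + Polynomial.C ((k:ℚ)^2) * (a s k * Q k) := by
      intro k hk
      have hk1 : 1 ≤ k := (Finset.mem_Icc.1 hk).1
      rw [Q_succ k hk1]
      ring
    rw [Finset.sum_congr rfl hsplit, Finset.sum_add_distrib]
    have hmap : ∑ k ∈ Finset.Icc 2 (s+1), a s (k-1) * Q k
        = ∑ k ∈ Finset.Icc 1 s, a s k * Q (k+1) := by
      rw [← Finset.map_add_right_Icc 1 s 1, Finset.sum_map]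
      simp [addRightEmbedding]
    have herase : (Finset.Icc 1 (s+1)).erase 1 = Finset.Icc 2 (s+1) := by
      rw [Finset.Icc_erase_left]
      exact (Finset.Icc_add_one_left_eq_Ioc 1 (s+1)).symm
    have hfirst : ∑ k ∈ Finset.Icc 1 (s+1), a s (k-1) * Q k
        = ∑ k ∈ Finset.Icc 1 s, a s k * Q (k+1) := by
      rw [← Finset.sum_erase_add (Finset.Icc 1 (s+1)) _ (by simp : 1 ∈ Finset.Icc 1 (s+1)),
        herase, hmap]
      norm_num [a_zero s hs]
    have hsecond : ∑ k ∈ Finset.Icc 1 (s+1), Polynomial.C ((k:ℚ)^2) * (a s k * Q k)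
        = ∑ k ∈ Finset.Icc 1 s, Polynomial.C ((k:ℚ)^2) * (a s k * Q k) := by
      rw [Finset.sum_Icc_succ_top (by omega : 1 ≤ s+1)]
      rw [a_top s]
      ring
    rw [← hfirst, ← hsecond, ← Finset.sum_add_distrib]
    refine Finset.sum_congr rfl fun k hk => ?_
    have hk1 : 1 ≤ k := (Finset.mem_Icc.1 hk).1
    rw [a_rec s k hk1]
    ring

lemma key : ∀ s : ℕ, 1 ≤ s →
    ∑ k ∈ Finset.Icc 1 s,
        Polynomial.C ((2 : ℚ) ^ k / ((2 * k).factorial : ℚ) * (cmk (2*s) k : ℚ)) *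
          ∏ l ∈ Finset.Icc 1 (k - 1),
            ((Polynomial.X : Polynomial ℚ) ^ 2 - Polynomial.C ((l : ℚ) ^ 2))
      = (Polynomial.X : Polynomial ℚ) ^ (2*s - 2) := by
  intro s hs
  exact key_aux s hs

end Stmt16

/-- In `ℚ[x]`:
`Σ_{k=1}^{m/2} (2^k/(2k)!)·c_{m,k}·∏_{ℓ=1}^{k-1}(x² - ℓ²) = x^{m-2}`. -/
theorem stmt_16 (m : ℕ) (hm : 2 ≤ m) (hme : Even m) :
    ∑ k ∈ Finset.Icc 1 (m / 2),
        Polynomial.C ((2 : ℚ) ^ k / ((2 * k).factorial : ℚ) * (cmk m k : ℚ)) *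
          ∏ l ∈ Finset.Icc 1 (k - 1),
            ((Polynomial.X : Polynomial ℚ) ^ 2 - Polynomial.C ((l : ℚ) ^ 2))
      = (Polynomial.X : Polynomial ℚ) ^ (m - 2) := by
  obtain ⟨t, rfl⟩ := hme
  have he : t + t = 2 * t := by ring
  have h1t : 1 ≤ t := by omega
  rw [he, Nat.mul_div_cancel_left t (by norm_num)]
  exact Stmt16.key t h1t
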